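/- If P and Q are finite posets on d elements possessing a common linear extension, then the origin of ℝ^{d+1} lies in the interior of Ω(O_P, O_Q) = conv((O_P × {1}) ∪ (−O_Q × {−1})). -/

import Mathlib

open Topology Filter


def orderPolytope {d : ℕ} (r : Fin d → Fin d → Prop) : Set (Fin d → ℝ) :=
  {x | (∀ i, 0 ≤ x i ∧ x i ≤ 1) ∧ ∀ i j, r i j → x j ≤ x i}

def OmegaPoly {d : ℕ} (A B : Set (Fin d → ℝ)) : Set (Fin (d + 1) → ℝ) :=
  convexHull ℝ
    (((fun x => Fin.snoc x (1 : ℝ)) '' A) ∪ ((fun x => Fin.snoc (-x) (-1 : ℝ)) '' B))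

/-- If the posets `P` and `Q` on `d` elements possess a common linear extension
(a permutation `σ` of `[d]` listing the elements compatibly with both orders),
then the origin of `ℝ^{d+1}` lies in the interior of `Ω(O_P, O_Q)`. -/
theorem zero_mem_interior_Omega_order_order (d : ℕ) (P Q : PartialOrder (Fin d))
    (σ : Equiv.Perm (Fin d))
    (hP : ∀ a b : Fin d, P.lt (σ a) (σ b) → a < b)
    (hQ : ∀ a b : Fin d, Q.lt (σ a) (σ b) → a < b) :
    (0 : Fin (d + 1) → ℝ) ∈
      interior (OmegaPoly (orderPolytope P.le) (orderPolytope Q.le)) := by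
  classical
  have hd1 : (0:ℝ) < (d:ℝ) + 1 := by positivity
  -- the common interior point
  set x : Fin d → ℝ := fun i => ((d : ℝ) - ((σ.symm i : ℕ) : ℝ)) / ((d:ℝ) + 1) with hxdef
  have hx_pos : ∀ i, 0 < x i := by
    intro i
    have h1 : ((σ.symm i : ℕ) : ℝ) < (d:ℝ) := by exact_mod_cast (σ.symm i).isLt
    have h2 : (0:ℝ) < (d:ℝ) - ((σ.symm i : ℕ) : ℝ) := by linarith
    exact div_pos h2 hd1
  have hx_lt1 : ∀ i, x i < 1 := by
    intro i
    rw [hxdef, div_lt_one hd1]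
    have : (0:ℝ) ≤ (((σ.symm i : ℕ)) : ℝ) := by positivity
    linarith
  have hx_mono : ∀ i j : Fin d, σ.symm i < σ.symm j → x j < x i := by
    intro i j h
    have h' : ((σ.symm i : ℕ) : ℝ) < ((σ.symm j : ℕ) : ℝ) := by exact_mod_cast h
    rw [hxdef, div_lt_div_iff₀ hd1 hd1]
    nlinarith
  -- strict monotonicity wrt P and Q
  have hxP_lt : ∀ i j : Fin d, P.lt i j → x j < x i := by
    intro i j h
    apply hx_mono
    apply hP
    rwa [σ.apply_symm_apply, σ.apply_symm_apply]
  have hxQ_lt : ∀ i j : Fin d, Q.lt i j → x j < x i := by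
    intro i j h
    apply hx_mono
    apply hQ
    rwa [σ.apply_symm_apply, σ.apply_symm_apply]
  -- x belongs to the order polytope of Q
  have hxQ : x ∈ orderPolytope Q.le := by
    refine ⟨fun i => ⟨(hx_pos i).le, (hx_lt1 i).le⟩, fun i j hij => ?_⟩
    by_cases hij' : i = j
    · subst hij'; exact le_refl _
    · have hlt : Q.lt i j := (Q.lt_iff_le_not_ge i j).mpr
        ⟨hij, fun h2 => hij' (Q.le_antisymm _ _ hij h2)⟩
      exact (hxQ_lt i j hlt).le
  -- the "open order polytope" of P
  set S : Set (Fin d → ℝ) :=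
    {u | (∀ i, 0 < u i ∧ u i < 1) ∧ ∀ i j : Fin d, P.lt i j → u j < u i} with hSdef
  have hS_open : IsOpen S := by
    have h1 : IsOpen {u : Fin d → ℝ | ∀ i, 0 < u i ∧ u i < 1} := by
      rw [Set.setOf_forall]
      refine isOpen_iInter_of_finite fun i => ?_
      exact (isOpen_lt continuous_const (continuous_apply i)).and
        (isOpen_lt (continuous_apply i) continuous_const)
    have h2 : IsOpen {u : Fin d → ℝ | ∀ i j : Fin d, P.lt i j → u j < u i} := by
      rw [Set.setOf_forall]
      refine isOpen_iInter_of_finite fun i => ?_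
      rw [Set.setOf_forall]
      refine isOpen_iInter_of_finite fun j => ?_
      by_cases h : P.lt i j
      · simp only [h, true_implies]
        exact isOpen_lt (continuous_apply j) (continuous_apply i)
      · simp only [h, false_implies, Set.setOf_true]
        exact isOpen_univ
    exact h1.and h2
  have hS_sub : S ⊆ orderPolytope P.le := by
    rintro u ⟨hu1, hu2⟩
    refine ⟨fun i => ⟨(hu1 i).1.le, (hu1 i).2.le⟩, fun i j hij => ?_⟩
    by_cases hij' : i = j
    · subst hij'; exact le_refl _
    · have hlt : P.lt i j := (P.lt_iff_le_not_ge i j).mpr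
        ⟨hij, fun h2 => hij' (P.le_antisymm _ _ hij h2)⟩
      exact (hu2 i j hlt).le
  have hxS : x ∈ S := ⟨fun i => ⟨hx_pos i, hx_lt1 i⟩, hxP_lt⟩
  -- the perturbation map
  set t : (Fin (d+1) → ℝ) → ℝ := fun y => (1 + y (Fin.last d)) / 2 with htdef
  set f : (Fin (d+1) → ℝ) → (Fin d → ℝ) :=
    fun y i => (y (Fin.castSucc i) + (1 - t y) * x i) / t y with hfdef
  have ht0 : t 0 = 1/2 := by simp [htdef]
  have hf0 : f 0 = x := by
    funext i
    simp only [hfdef, ht0, Pi.zero_apply]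
    ring
  have hfc : ContinuousAt f 0 := by
    rw [continuousAt_pi]
    intro i
    apply ContinuousAt.div
    · exact ((continuous_apply (Fin.castSucc i)).continuousAt).add
        (by fun_prop)
    · fun_prop
    · rw [ht0]; norm_num
  -- the neighborhood
  have hUnhds : f ⁻¹' S ∩ {y : Fin (d+1) → ℝ | |y (Fin.last d)| < 1} ∈ 𝓝 (0 : Fin (d+1) → ℝ) := by
    apply Filter.inter_mem
    · exact hfc.preimage_mem_nhds (hS_open.mem_nhds (hf0 ▸ hxS))
    · have : IsOpen {y : Fin (d+1) → ℝ | |y (Fin.last d)| < 1} :=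
        isOpen_lt ((continuous_apply (Fin.last d)).abs) continuous_const
      exact this.mem_nhds (by simp)
  rw [mem_interior_iff_mem_nhds]
  refine Filter.mem_of_superset hUnhds ?_
  rintro y ⟨hyS, hy1⟩
  have hy1' : |y (Fin.last d)| < 1 := hy1
  have hyl : -1 < y (Fin.last d) ∧ y (Fin.last d) < 1 := abs_lt.mp hy1'
  have ht_pos : 0 < t y := by rw [htdef]; dsimp only; linarith [hyl.1]
  have ht_lt : t y < 1 := by rw [htdef]; dsimp only; linarith [hyl.2]
  -- the two endpoints
  have hmem1 : (Fin.snoc (f y) (1:ℝ) : Fin (d+1) → ℝ) ∈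
      ((fun x => Fin.snoc x (1 : ℝ)) '' orderPolytope P.le) ∪
      ((fun x => Fin.snoc (-x) (-1 : ℝ)) '' orderPolytope Q.le) :=
    Set.mem_union_left _ (Set.mem_image_of_mem _ (hS_sub hyS))
  have hmem2 : (Fin.snoc (-x) (-1:ℝ) : Fin (d+1) → ℝ) ∈
      ((fun x => Fin.snoc x (1 : ℝ)) '' orderPolytope P.le) ∪
      ((fun x => Fin.snoc (-x) (-1 : ℝ)) '' orderPolytope Q.le) :=
    Set.mem_union_right _ (Set.mem_image_of_mem _ hxQ)
  have hcombo : y = t y • (Fin.snoc (f y) (1:ℝ) : Fin (d+1) → ℝ) + (1 - t y) • (Fin.snoc (-x) (-1:ℝ) : Fin (d+1) → ℝ) := by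
    funext i
    refine Fin.lastCases ?_ ?_ i
    · simp only [Pi.add_apply, Pi.smul_apply, Fin.snoc_last, smul_eq_mul, htdef]
      ring
    · intro k
      simp only [Pi.add_apply, Pi.smul_apply, Fin.snoc_castSucc, Pi.neg_apply,
        smul_eq_mul, hfdef]
      field_simp
      ring
  rw [hcombo]
  exact (convex_convexHull ℝ _) (subset_convexHull ℝ _ hmem1) (subset_convexHull ℝ _ hmem2)
    ht_pos.le (by linarith) (by ring)
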